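/- Let A be a KV-algebra over a field F of characteristic zero and W a KV-bimodule of A, and let G := A ⊕ W be the semidirect product KV-algebra with multiplication (a,w)(a',w') := (aa', aw' + wa'). Then {0} ⊕ J(W) ⊆ J(G) and J(G) ⊆ J(A) ⊕ J(W); consequently J(G) is a graded subspace: if (a₀,w₀) ∈ J(G) then (a₀,0) ∈ J(G) and (0,w₀) ∈ J(G). -/
import Mathlib


/-- for the semidirect product `G = A ⊕ W` with
`(a,w)(a',w') = (aa', aw' + wa')`, one has `{0} ⊕ J(W) ⊆ J(G)` and
`J(G) ⊆ J(A) ⊕ J(W)`; consequently `J(G)` is a graded subspace. -/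
theorem jacobi_of_semidirect_product
    {F : Type*} [Field F] [CharZero F]
    {A : Type*} [AddCommGroup A] [Module F A]
    {W : Type*} [AddCommGroup W] [Module F W]
    (mul : A →ₗ[F] A →ₗ[F] A)
    (hA : ∀ a b c : A, mul (mul a b) c - mul a (mul b c)
        = mul (mul b a) c - mul b (mul a c))
    (l : A →ₗ[F] W →ₗ[F] W) (r : W →ₗ[F] A →ₗ[F] W)
    (hW1 : ∀ (a b : A) (w : W), l (mul a b) w - l a (l b w)
        = l (mul b a) w - l b (l a w))
    (hW2 : ∀ (a : A) (w : W) (b : A), r (l a w) b - l a (r w b)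
        = r (r w a) b - r w (mul a b)) :
    letI mulG : A × W → A × W → A × W :=
      fun x y => (mul x.1 y.1, l x.1 y.2 + r x.2 y.1)
    letI JG : Set (A × W) :=
      {ξ : A × W | ∀ x y : A × W, mulG (mulG x y) ξ - mulG x (mulG y ξ) = 0}
    letI JA : Set A :=
      {ξ : A | ∀ a b : A, mul (mul a b) ξ - mul a (mul b ξ) = 0}
    letI JW : Set W :=
      {w : W | ∀ a b : A, l (mul a b) w - l a (l b w) = 0}
    -- `{0} ⊕ J(W) ⊆ J(G)`
    (∀ w ∈ JW, ((0 : A), w) ∈ JG)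
    -- `J(G) ⊆ J(A) ⊕ J(W)`
    ∧ (∀ ξ ∈ JG, ξ.1 ∈ JA ∧ ξ.2 ∈ JW)
    -- `J(G)` is graded
    ∧ (∀ ξ ∈ JG, (ξ.1, (0 : W)) ∈ JG ∧ ((0 : A), ξ.2) ∈ JG) := by
  simp only [Set.mem_setOf_eq, Prod.ext_iff, Prod.fst_sub, Prod.snd_sub,
    Prod.fst_zero, Prod.snd_zero, sub_eq_zero]
  have key : ∀ ξ : A × W,
      (∀ x y : A × W,
        mul (mul x.1 y.1) ξ.1 = mul x.1 (mul y.1 ξ.1) ∧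
        l (mul x.1 y.1) ξ.2 + r (l x.1 y.2 + r x.2 y.1) ξ.1
          = l x.1 (l y.1 ξ.2 + r y.2 ξ.1) + r x.2 (mul y.1 ξ.1)) →
      (∀ a b : A, mul (mul a b) ξ.1 = mul a (mul b ξ.1)) ∧
      (∀ a b : A, l (mul a b) ξ.2 = l a (l b ξ.2)) ∧
      (∀ (a : A) (w : W), r (l a w) ξ.1 = l a (r w ξ.1)) ∧
      (∀ (v : W) (b : A), r (r v b) ξ.1 = r v (mul b ξ.1)) := by
    intro ξ h
    refine ⟨fun a b => (h (a,0) (b,0)).1, ?_, ?_, ?_⟩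
    · intro a b
      have := (h (a,0) (b,0)).2
      simpa using this
    · intro a w
      have := (h (a,0) (0,w)).2
      simpa using this
    · intro v b
      have := (h (0,v) (b,0)).2
      simpa using this
  refine ⟨?_, ?_, ?_⟩
  · intro w hw x y
    constructor
    · simp
    · simp [hw x.1 y.1]
  · intro ξ hξ
    obtain ⟨h1, h2, h3, h4⟩ := key ξ hξ
    exact ⟨h1, h2⟩
  · intro ξ hξ
    obtain ⟨h1, h2, h3, h4⟩ := key ξ hξ
    constructor
    · intro x y
      refine ⟨h1 x.1 y.1, ?_⟩
      simp [h3, h4, map_add]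
    · intro x y
      refine ⟨by simp, ?_⟩
      simp [h2, map_add]
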